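/- Suppose C ≥ 2, b ≥ 1, and n ≥ C·b + 2·C·log(2·log 2C + b). Then (2·log log 2n + b)/n ≤ 1/C. -/
import Mathlib


set_option autoImplicit false

open MeasureTheory ProbabilityTheory Matrix Finset
open scoped Classical ENNReal

noncomputable section

namespace Paper

private lemma log_le_aux {x a : ℝ} (hx : 0 < x) (ha : 0 < a) :
    a * Real.log x ≤ x + a * (Real.log a - 1) := by
  have h := Real.log_le_sub_one_of_pos (div_pos hx ha)
  rw [Real.log_div hx.ne' ha.ne'] at h
  have h2 : a * (Real.log x - Real.log a) ≤ a * (x / a - 1) :=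
    mul_le_mul_of_nonneg_left h ha.le
  have h3 : a * (x / a) = x := by field_simp
  nlinarith [h2, h3]

theorem loglog_div_le {C b n : ℝ} (hC : 2 ≤ C) (hb : 1 ≤ b)
    (hn : C * b + 2 * C * Real.log (2 * Real.log (2 * C) + b) ≤ n) :
    (2 * Real.log (Real.log (2 * n)) + b) / n ≤ 1 / C := by
  have hCpos : (0:ℝ) < C := by linarith
  obtain ⟨A, hAdef⟩ : ∃ x:ℝ, x = 2 * Real.log (2*C) + b := ⟨_, rfl⟩
  obtain ⟨n₀, hn₀def⟩ : ∃ x:ℝ, x = C * b + 2 * C * Real.log A := ⟨_, rfl⟩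
  have hnn₀ : n₀ ≤ n := by rw [hn₀def, hAdef]; exact hn
  have hlog2 : (0.6931471803:ℝ) < Real.log 2 := Real.log_two_gt_d9
  have hm : (0.6931471803:ℝ) < Real.log (2 * C) := by
    have : Real.log 2 ≤ Real.log (2 * C) :=
      Real.log_le_log (by norm_num) (by linarith)
    linarith
  have hA2 : (2:ℝ) ≤ A := by rw [hAdef]; linarith
  have hApos : (0:ℝ) < A := by linarith
  have hlogA : (0:ℝ) ≤ Real.log A := Real.log_nonneg (by linarith)
  have hn₀C : C ≤ n₀ := by
    rw [hn₀def]
    have h4 : C*1 ≤ C*b := mul_le_mul_of_nonneg_left hb hCpos.le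
    have h5 : (0:ℝ) ≤ 2*C*Real.log A := by positivity
    linarith
  have hn₀pos : (0:ℝ) < n₀ := by linarith
  have hn₀2 : (2:ℝ) ≤ n₀ := by linarith
  have hnpos : (0:ℝ) < n := by linarith
  have he : (2.7182818283:ℝ) < Real.exp 1 := Real.exp_one_gt_d9
  -- key fact: log (2 n₀) ≤ A
  have fact3 : Real.log (2 * n₀) ≤ A := by
    rw [Real.log_le_iff_le_exp (by linarith)]
    have hexpA : Real.exp A = (2*C)^2 * Real.exp b := by
      rw [hAdef, Real.exp_add]
      congr 1
      rw [show (2:ℝ) * Real.log (2*C) = Real.log ((2*C)^2) by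
        rw [Real.log_pow]; norm_num]
      exact Real.exp_log (by positivity)
    rw [hexpA, hn₀def]
    have hlA : Real.exp 1 * Real.log A ≤ A := by
      have := log_le_aux hApos (Real.exp_pos 1)
      simpa [Real.log_exp] using this
    have hlA2 : Real.exp 1 * Real.log A ≤ 2 * Real.log (2*C) + b := by
      linarith [hAdef.le, hAdef.ge]
    have h2C : Real.exp 1 * Real.log (2*C) ≤ 2*C := by
      have := log_le_aux (show (0:ℝ) < 2*C by linarith) (Real.exp_pos 1)
      simpa [Real.log_exp] using this
    have heb : Real.exp 1 * b ≤ Real.exp b := by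
      have h1 : b ≤ Real.exp (b - 1) := by
        have := Real.add_one_le_exp (b - 1); linarith
      calc Real.exp 1 * b ≤ Real.exp 1 * Real.exp (b-1) :=
            mul_le_mul_of_nonneg_left h1 (Real.exp_pos 1).le
        _ = Real.exp b := by rw [← Real.exp_add]; ring_nf
    have heb1 : Real.exp 1 ≤ Real.exp b := Real.exp_le_exp.2 hb
    have hepos := Real.exp_pos 1
    -- step 1: e^2 * LHS ≤ 2Cb e^2 + 16 C^2 + 4Cb e
    have q1 : Real.exp 1 * (4*C*(Real.exp 1 * Real.log A)) ≤
        Real.exp 1 * (4*C*(2*Real.log (2*C) + b)) := by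
      refine mul_le_mul_of_nonneg_left ?_ hepos.le
      exact mul_le_mul_of_nonneg_left hlA2 (by positivity)
    have q2 : 8*C*(Real.exp 1 * Real.log (2*C)) ≤ 8*C*(2*C) :=
      mul_le_mul_of_nonneg_left h2C (by positivity)
    have step1 : Real.exp 1 * Real.exp 1 * (2*(C*b + 2*C*Real.log A)) ≤
        2*C*b*(Real.exp 1*Real.exp 1) + 16*C^2 + 4*C*b*Real.exp 1 := by
      nlinarith [q1, q2]
    -- step 2: 2Cb e^2 + 16 C^2 + 4Cb e ≤ e^2 * (2C)^2 * exp b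
    have r1 : 2*C^2*(Real.exp 1*Real.exp 1)*Real.exp 1 ≤
        2*C^2*(Real.exp 1*Real.exp 1)*Real.exp b :=
      mul_le_mul_of_nonneg_left heb1 (by positivity)
    have r2 : 2*C^2*Real.exp 1*(Real.exp 1 * b) ≤
        2*C^2*Real.exp 1*Real.exp b :=
      mul_le_mul_of_nonneg_left heb (by positivity)
    have t1 : 4*C*b*Real.exp 1 ≤ 4*C*b*(Real.exp 1*Real.exp 1) := by
      have h := mul_nonneg (mul_nonneg (by positivity : (0:ℝ) ≤ 4*C*b) hepos.le)
        (by linarith : (0:ℝ) ≤ Real.exp 1 - 1)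
      linarith [h]
    have t2 : 6*C*b*(Real.exp 1*Real.exp 1) ≤
        2*C^2*b*(Real.exp 1*Real.exp 1*Real.exp 1) := by
      have h := mul_nonneg (mul_nonneg (mul_nonneg
        (by positivity : (0:ℝ) ≤ 2*C*b) hepos.le) hepos.le)
        (show (0:ℝ) ≤ C*Real.exp 1 - 3 by
          have h5 : (2:ℝ)*2.7 ≤ C*Real.exp 1 :=
            mul_le_mul hC (by linarith) (by norm_num) (by linarith)
          linarith)
      linarith [h]
    have r2' : 2*C^2*b*(Real.exp 1*Real.exp 1*Real.exp 1) ≤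
        2*C^2*(Real.exp 1*Real.exp 1)*Real.exp b := by
      have h := mul_le_mul_of_nonneg_left heb
        (by positivity : (0:ℝ) ≤ 2*C^2*(Real.exp 1*Real.exp 1))
      linarith [h]
    have he3 : (19:ℝ) ≤ Real.exp 1*Real.exp 1*Real.exp 1 := by nlinarith [he, sq_nonneg (Real.exp 1 - 2.7)]
    have t3 : 16*C^2 ≤ 2*C^2*(Real.exp 1*Real.exp 1*Real.exp 1) := by
      linarith [mul_le_mul_of_nonneg_left he3 (by positivity : (0:ℝ) ≤ 2*C^2), sq_nonneg C]
    have step2 : 2*C*b*(Real.exp 1*Real.exp 1) + 16*C^2 + 4*C*b*Real.exp 1 ≤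
        Real.exp 1 * Real.exp 1 * ((2*C)^2 * Real.exp b) := by
      linarith [t1, t2, r2', t3, r1]
    have hfin : Real.exp 1 * Real.exp 1 * (2*(C*b + 2*C*Real.log A)) ≤
        Real.exp 1 * Real.exp 1 * ((2*C)^2 * Real.exp b) := le_trans step1 step2
    exact le_of_mul_le_mul_left hfin (by positivity)
  -- main chain
  obtain ⟨L, hLdef⟩ : ∃ x:ℝ, x = Real.log (2*n) := ⟨_, rfl⟩
  have hLge : Real.log (2 * n₀) ≤ L := by
    rw [hLdef]; exact Real.log_le_log (by linarith) (by linarith)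
  have hLpos : (0:ℝ) < L := by
    rw [hLdef]; exact Real.log_pos (by linarith)
  have h1 : (2*n₀) * L ≤ 2*n + (2*n₀) * (Real.log (2*n₀) - 1) := by
    rw [hLdef]; exact log_le_aux (by linarith) (by linarith)
  have h2 : A * Real.log L ≤ L + A * (Real.log A - 1) :=
    log_le_aux hLpos hApos
  have s1 : n₀ * L ≤ n + n₀ * (A - 1) := by
    linarith [h1, mul_le_mul_of_nonneg_left fact3 hn₀pos.le]
  have s2 : A * n₀ * Real.log L ≤ n - n₀ + n₀ * A * Real.log A := by
    linarith [mul_le_mul_of_nonneg_left h2 hn₀pos.le,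
      mul_le_mul_of_nonneg_left s1 hApos.le]
  have hAn₀ : 2*C ≤ A * n₀ := by
    linarith [mul_le_mul_of_nonneg_right hA2 hn₀pos.le]
  have key : C * (2 * Real.log L + b) ≤ n := by
    have e2 : A * n₀ * (C*b) + 2*C*n₀*A*Real.log A = A * n₀ * n₀ := by
      rw [hn₀def]; ring
    have h3 : A * n₀ * (C * (2 * Real.log L + b)) ≤ A * n₀ * n := by
      linarith [mul_le_mul_of_nonneg_left s2 (by positivity : (0:ℝ) ≤ 2*C),
        mul_nonneg (sub_nonneg.2 hAn₀) (sub_nonneg.2 hnn₀), e2]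
    exact le_of_mul_le_mul_left h3 (by positivity)
  rw [div_le_div_iff₀ hnpos hCpos, ← hLdef]
  linarith [key]


end Paper
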